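/- (Robustness of white patch brightness under achromatic illuminant.) Let η_o = !![o₀+o₁, o₂; o₂, o₀−o₁] and η_ι = !![ι₀+ι₁, ι₂; ι₂, ι₀−ι₁] be effects (observer and illuminant). The brightness of the color perceived from the white patch ρ₀ = (1/2)Id₂ lit by the illuminant and observed by the observer satisfies Tr( η_o^{1/2} (η_ι^{1/2} · (1/2)Id₂ · η_ι^{1/2}) η_o^{1/2} ) = o₀ι₀ + o₁ι₁ + o₂ι₂. Consequently, for fixed o₀ ∈ (0,1) and ι₀ > 0, this brightness is independent of (o₁,o₂) as (o₁,o₂) ranges over all values making η_o an effect if and only if ι₁ = ι₂ = 0, i.e., if and only if the illuminant is achromatic, in which case it equals o₀ι₀. -/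

import Mathlib

/-- `IsEffect e₀ e₁ e₂` means that `!![e₀+e₁, e₂; e₂, e₀−e₁]` satisfies
`0 ≤ η ≤ Id₂` in the Loewner order. -/
def IsEffect (e₀ e₁ e₂ : ℝ) : Prop :=
  (!![e₀ + e₁, e₂; e₂, e₀ - e₁] : Matrix (Fin 2) (Fin 2) ℝ).PosSemidef ∧
    ((1 : Matrix (Fin 2) (Fin 2) ℝ) - !![e₀ + e₁, e₂; e₂, e₀ - e₁]).PosSemidef

lemma psd2 (p q r : ℝ) (hp : 0 ≤ p) (hq : 0 ≤ q) (h : r ^ 2 ≤ p * q) :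
    (!![p, r; r, q] : Matrix (Fin 2) (Fin 2) ℝ).PosSemidef := by
  rw [Matrix.posSemidef_iff_dotProduct_mulVec]
  constructor
  · ext i j
    fin_cases i <;> fin_cases j <;>
      simp [Matrix.conjTranspose, Matrix.vecHead, Matrix.vecTail]
  · intro x
    have hx : dotProduct (star x)
        ((!![p, r; r, q] : Matrix (Fin 2) (Fin 2) ℝ).mulVec x) =
        p * (x 0)^2 + 2 * r * (x 0 * x 1) + q * (x 1)^2 := by
      simp [dotProduct, Matrix.mulVec, Fin.sum_univ_two]
      ring
    rw [hx]
    rcases eq_or_lt_of_le hp with hp0 | hp0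
    · have hr : r = 0 := by nlinarith [sq_nonneg r]
      subst hr
      nlinarith [mul_nonneg hq (sq_nonneg (x 1)), sq_nonneg (x 0)]
    · nlinarith [sq_nonneg (p * x 0 + r * x 1),
        mul_nonneg (sub_nonneg.mpr h) (sq_nonneg (x 1))]

lemma one_sub_mat (p q r : ℝ) :
    ((1 : Matrix (Fin 2) (Fin 2) ℝ) - !![p, r; r, q]) = !![1 - p, -r; -r, 1 - q] := by
  ext i j
  fin_cases i <;> fin_cases j <;> simp [Matrix.one_apply]

lemma isEffect_of (e₀ e₁ e₂ : ℝ) (h1 : e₁ ^ 2 + e₂ ^ 2 ≤ e₀ ^ 2)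
    (h2 : e₁ ^ 2 + e₂ ^ 2 ≤ (1 - e₀) ^ 2) (h3 : 0 ≤ e₀) (h4 : e₀ ≤ 1) :
    IsEffect e₀ e₁ e₂ := by
  constructor
  · exact psd2 _ _ _ (by nlinarith [sq_nonneg e₂, sq_nonneg (e₀ - e₁)])
      (by nlinarith [sq_nonneg e₂, sq_nonneg (e₀ + e₁)]) (by nlinarith)
  · rw [one_sub_mat]
    exact psd2 _ _ _ (by nlinarith [sq_nonneg e₂, sq_nonneg (1 - e₀ + e₁)])
      (by nlinarith [sq_nonneg e₂, sq_nonneg (1 - e₀ - e₁)]) (by nlinarith)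

/-- Robustness of white patch brightness under achromatic illuminant: the brightness of
the white patch `(1/2)·Id₂` lit by the illuminant `η_ι` and observed by `η_o` is
`o₀ι₀ + o₁ι₁ + o₂ι₂`; for fixed `o₀ ∈ (0,1)` and `ι₀ > 0` this quantity is independent
of the observer's effect vector iff the illuminant is achromatic (`ι₁ = ι₂ = 0`), in
which case it equals `o₀ι₀`. -/
theorem whitePatch_brightness (o₀ o₁ o₂ ι₀ ι₁ ι₂ : ℝ)
    (ho : IsEffect o₀ o₁ o₂) (hι : IsEffect ι₀ ι₁ ι₂)
    (qo qι : Matrix (Fin 2) (Fin 2) ℝ)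
    (hqo : qo.PosSemidef) (hqo2 : qo * qo = !![o₀ + o₁, o₂; o₂, o₀ - o₁])
    (hqι : qι.PosSemidef) (hqι2 : qι * qι = !![ι₀ + ι₁, ι₂; ι₂, ι₀ - ι₁]) :
    (qo * (qι * ((1 / 2 : ℝ) • (1 : Matrix (Fin 2) (Fin 2) ℝ)) * qι) * qo).trace =
        o₀ * ι₀ + o₁ * ι₁ + o₂ * ι₂ ∧
    (o₀ ∈ Set.Ioo (0 : ℝ) 1 → 0 < ι₀ →
      ((∀ a₁ a₂ b₁ b₂ : ℝ, IsEffect o₀ a₁ a₂ → IsEffect o₀ b₁ b₂ →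
          o₀ * ι₀ + a₁ * ι₁ + a₂ * ι₂ = o₀ * ι₀ + b₁ * ι₁ + b₂ * ι₂) ↔
        (ι₁ = 0 ∧ ι₂ = 0))) ∧
    (ι₁ = 0 → ι₂ = 0 →
      (qo * (qι * ((1 / 2 : ℝ) • (1 : Matrix (Fin 2) (Fin 2) ℝ)) * qι) * qo).trace =
        o₀ * ι₀) := by
  have e1 : qo * (qι * ((1 / 2 : ℝ) • (1 : Matrix (Fin 2) (Fin 2) ℝ)) * qι) * qo =
      (1 / 2 : ℝ) • (qo * (qι * qι) * qo) := by
    simp only [mul_smul_comm, smul_mul_assoc, mul_one]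
  have hT : (qo * (qι * ((1 / 2 : ℝ) • (1 : Matrix (Fin 2) (Fin 2) ℝ)) * qι) * qo).trace =
      o₀ * ι₀ + o₁ * ι₁ + o₂ * ι₂ := by
    rw [e1, Matrix.trace_smul, Matrix.trace_mul_cycle, hqo2, hqι2]
    simp [Matrix.trace_fin_two, Matrix.mul_apply, Fin.sum_univ_two]
    ring
  refine ⟨hT, ?_, ?_⟩
  · rintro ⟨ho0, ho1⟩ hι0
    constructor
    · intro h
      set ε := min o₀ (1 - o₀) with hεdef
      have hε : 0 < ε := lt_min ho0 (by linarith)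
      have hεo : ε ≤ o₀ := min_le_left _ _
      have hεo' : ε ≤ 1 - o₀ := min_le_right _ _
      have hA : IsEffect o₀ ε 0 :=
        isEffect_of _ _ _ (by nlinarith) (by nlinarith) ho0.le (by linarith)
      have hB : IsEffect o₀ 0 ε :=
        isEffect_of _ _ _ (by nlinarith) (by nlinarith) ho0.le (by linarith)
      have hC : IsEffect o₀ 0 0 :=
        isEffect_of _ _ _ (by nlinarith) (by nlinarith) ho0.le (by linarith)
      have h1 := h ε 0 0 0 hA hC
      have h2 := h 0 ε 0 0 hB hC
      constructor
      · have : ε * ι₁ = 0 := by linarith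
        exact (mul_eq_zero.mp this).resolve_left hε.ne'
      · have : ε * ι₂ = 0 := by linarith
        exact (mul_eq_zero.mp this).resolve_left hε.ne'
    · rintro ⟨h1, h2⟩ a₁ a₂ b₁ b₂ _ _
      rw [h1, h2]; ring
  · intro h1 h2
    rw [hT, h1, h2]; ring
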